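/- If G is a connected bipartite equimatchable graph with bipartition U ∪ V where |U| = |V|, then G is isomorphic to the complete bipartite graph K_{n,n} where n = |U|. -/

import Mathlib

/-- `F` is an edge dominating set of `G`: every edge of `G` is in `F` or shares a
vertex with an edge of `F` (edges of `F` themselves share a vertex with themselves). -/
def IsEDS {V : Type*} (G : SimpleGraph V) (F : Finset (Sym2 V)) : Prop :=
  ↑F ⊆ G.edgeSet ∧ ∀ e ∈ G.edgeSet, ∃ f ∈ F, ∃ v : V, v ∈ e ∧ v ∈ f

/-- `F` is a minimal edge dominating set of `G`. -/
def IsMinEDS {V : Type*} (G : SimpleGraph V) (F : Finset (Sym2 V)) : Prop :=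
  IsEDS G F ∧ ∀ F' ⊂ F, ¬ IsEDS G F'

/-- `G` is well-edge-dominated: all minimal edge dominating sets have the same size. -/
def WellEdgeDominated {V : Type*} (G : SimpleGraph V) : Prop :=
  ∀ F₁ F₂ : Finset (Sym2 V), IsMinEDS G F₁ → IsMinEDS G F₂ → F₁.card = F₂.card

/-- `M` is a matching of `G`: a set of pairwise vertex-disjoint edges. -/
def IsMatchingSet {V : Type*} (G : SimpleGraph V) (M : Finset (Sym2 V)) : Prop :=
  ↑M ⊆ G.edgeSet ∧ ∀ e ∈ M, ∀ f ∈ M, e ≠ f → ∀ v : V, ¬ (v ∈ e ∧ v ∈ f)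

/-- `M` is a maximal matching of `G`: a matching such that every edge of `G`
shares a vertex with an edge of `M` (so no edge can be added). -/
def IsMaximalMatching {V : Type*} (G : SimpleGraph V) (M : Finset (Sym2 V)) : Prop :=
  IsMatchingSet G M ∧ ∀ e ∈ G.edgeSet, ∃ f ∈ M, ∃ v : V, v ∈ e ∧ v ∈ f

/-- `G` is equimatchable: all maximal matchings have the same size. -/
def Equimatchable {V : Type*} (G : SimpleGraph V) : Prop :=
  ∀ M₁ M₂ : Finset (Sym2 V), IsMaximalMatching G M₁ → IsMaximalMatching G M₂ →
    M₁.card = M₂.card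



open Finset
set_option linter.unusedSectionVars false
set_option linter.unusedVariables false

section Helpers
variable {W : Type*} [Fintype W] [DecidableEq W] {G : SimpleGraph W}

/-- `v` is saturated by the edge set `N`. -/
def sat (N : Finset (Sym2 W)) (v : W) : Prop := ∃ e ∈ N, v ∈ e

instance (N : Finset (Sym2 W)) : DecidablePred (sat N) := fun v => by unfold sat; infer_instance

lemma matching_sub {N L : Finset (Sym2 W)} (hN : IsMatchingSet G N) (hL : L ⊆ N) :
    IsMatchingSet G L :=
  ⟨fun e he => hN.1 (hL he), fun e he f hf => hN.2 e (hL he) f (hL hf)⟩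

lemma matching_unique {N : Finset (Sym2 W)} (hN : IsMatchingSet G N) {a b c : W}
    (h1 : s(a,b) ∈ N) (h2 : s(a,c) ∈ N) : b = c := by
  by_cases h : s(a,b) = s(a,c)
  · rw [Sym2.eq_iff] at h
    rcases h with ⟨-, h⟩ | ⟨rfl, rfl⟩
    · exact h
    · rfl
  · exact absurd ⟨Sym2.mem_mk_left a b, Sym2.mem_mk_left a c⟩ (hN.2 _ h1 _ h2 h a)

lemma matching_unique' {N : Finset (Sym2 W)} (hN : IsMatchingSet G N) {a : W} {e f : Sym2 W}
    (h1 : e ∈ N) (h2 : f ∈ N) (hae : a ∈ e) (haf : a ∈ f) : e = f := by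
  by_contra h
  exact hN.2 e h1 f h2 h a ⟨hae, haf⟩

lemma adj_of_mem_matching {N : Finset (Sym2 W)} (hN : IsMatchingSet G N) {a b : W}
    (h : s(a,b) ∈ N) : G.Adj a b := by
  have := hN.1 h
  rwa [SimpleGraph.mem_edgeSet] at this

lemma matching_insert {N : Finset (Sym2 W)} (hN : IsMatchingSet G N) {a b : W}
    (hab : G.Adj a b) (ha : ¬ sat N a) (hb : ¬ sat N b) :
    IsMatchingSet G (insert s(a,b) N) := by
  constructor
  · intro e he
    rcases Finset.mem_insert.mp he with rfl | he
    · exact G.mem_edgeSet.mpr hab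
    · exact hN.1 he
  · intro e he f hf hef v hv
    rcases Finset.mem_insert.mp he with rfl | heN
    · rcases Finset.mem_insert.mp hf with rfl | hfN
      · exact hef rfl
      · have hv1 := hv.1
        rw [Sym2.mem_iff] at hv1
        rcases hv1 with h' | h'
        · exact ha ⟨f, hfN, h' ▸ hv.2⟩
        · exact hb ⟨f, hfN, h' ▸ hv.2⟩
    · rcases Finset.mem_insert.mp hf with rfl | hfN
      · have hv2 := hv.2
        rw [Sym2.mem_iff] at hv2
        rcases hv2 with h' | h'
        · exact ha ⟨e, heN, h' ▸ hv.1⟩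
        · exact hb ⟨e, heN, h' ▸ hv.1⟩
      · exact hN.2 e heN f hfN hef v hv

lemma not_mem_of_not_sat {N : Finset (Sym2 W)} {a : W} {e : Sym2 W}
    (ha : ¬ sat N a) (hae : a ∈ e) : e ∉ N := fun he => ha ⟨e, he, hae⟩

/-- Every matching extends to a maximal matching. -/
lemma extend_to_maximal {N : Finset (Sym2 W)} (hN : IsMatchingSet G N) :
    ∃ K, N ⊆ K ∧ IsMaximalMatching G K := by
  classical
  set S : Finset (Finset (Sym2 W)) :=
    Finset.univ.filter (fun K => N ⊆ K ∧ IsMatchingSet G K) with hS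
  have hNS : N ∈ S := by simp [hS, hN]
  obtain ⟨K, hKS, hmax⟩ := S.exists_max_image Finset.card ⟨N, hNS⟩
  simp only [hS, Finset.mem_filter, Finset.mem_univ, true_and] at hKS
  refine ⟨K, hKS.1, hKS.2, ?_⟩
  intro e he
  by_contra hcon
  push_neg at hcon
  -- e shares no vertex with any edge of K; insert it
  induction e using Sym2.ind with
  | _ a b =>
    have hab : G.Adj a b := G.mem_edgeSet.mp he
    have ha : ¬ sat K a := fun ⟨f, hf, hvf⟩ => hcon f hf a (Sym2.mem_mk_left a b) hvf
    have hb : ¬ sat K b := fun ⟨f, hf, hvf⟩ => hcon f hf b (Sym2.mem_mk_right a b) hvf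
    have hK' : IsMatchingSet G (insert s(a,b) K) := matching_insert hKS.2 hab ha hb
    have hmem : insert s(a,b) K ∈ S := by
      simp only [hS, Finset.mem_filter, Finset.mem_univ, true_and]
      exact ⟨hKS.1.trans (Finset.subset_insert _ _), hK'⟩
    have := hmax _ hmem
    have hnm : s(a,b) ∉ K := not_mem_of_not_sat ha (Sym2.mem_mk_left a b)
    rw [Finset.card_insert_of_notMem hnm] at this
    omega

lemma exists_maximal (G : SimpleGraph W) : ∃ K, IsMaximalMatching G K := by
  obtain ⟨K, _, hK⟩ := extend_to_maximal (G := G) (N := ∅)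
    ⟨by simp, by simp⟩
  exact ⟨K, hK⟩

lemma maximal_of_sat {K : Finset (Sym2 W)} (hK : IsMatchingSet G K)
    (h : ∀ a b : W, G.Adj a b → sat K a ∨ sat K b) : IsMaximalMatching G K := by
  refine ⟨hK, ?_⟩
  intro e he
  induction e using Sym2.ind with
  | _ a b =>
    rcases h a b (G.mem_edgeSet.mp he) with ⟨f, hf, hvf⟩ | ⟨f, hf, hvf⟩
    · exact ⟨f, hf, a, Sym2.mem_mk_left a b, hvf⟩
    · exact ⟨f, hf, b, Sym2.mem_mk_right a b, hvf⟩

end Helpers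

section Bipartite
variable {W : Type*} [Fintype W] [DecidableEq W] {G : SimpleGraph W}
variable {U V : Finset W}

/-- In a bipartite graph, an edge meets the side `U` in exactly one vertex;
the number of `U`-saturated vertices equals the number of edges of a matching. -/
lemma card_sat_side (hdisj : Disjoint U V)
    (hbip : ∀ a b : W, G.Adj a b → (a ∈ U ∧ b ∈ V) ∨ (a ∈ V ∧ b ∈ U))
    {N : Finset (Sym2 W)} (hN : IsMatchingSet G N) :
    (U.filter (sat N)).card = N.card := by
  classical
  have hdl := Finset.disjoint_left.mp hdisj
  have hexists : ∀ e ∈ N, ∃ u ∈ U, u ∈ e := by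
    intro e he
    induction e using Sym2.ind with
    | _ a b =>
      rcases hbip a b (adj_of_mem_matching hN he) with ⟨ha, _⟩ | ⟨_, hb⟩
      · exact ⟨a, ha, Sym2.mem_mk_left a b⟩
      · exact ⟨b, hb, Sym2.mem_mk_right a b⟩
  have huniq : ∀ e ∈ N, ∀ u ∈ U, ∀ u' ∈ U, u ∈ e → u' ∈ e → u = u' := by
    intro e he
    induction e using Sym2.ind with
    | _ a b =>
      intro u hu u' hu' hue hue'
      have hadj := adj_of_mem_matching hN he
      rw [Sym2.mem_iff] at hue hue'
      have hnot : ¬ (a ∈ U ∧ b ∈ U) := by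
        rintro ⟨haU, hbU⟩
        rcases hbip a b hadj with ⟨_, hbV⟩ | ⟨haV, _⟩
        · exact hdl hbU hbV
        · exact hdl haU haV
      rcases hue with rfl | rfl <;> rcases hue' with rfl | rfl
      · rfl
      · exact absurd ⟨hu, hu'⟩ hnot
      · exact absurd ⟨hu', hu⟩ hnot
      · rfl
  symm
  refine Finset.card_bij (fun e he => (hexists e he).choose) ?_ ?_ ?_
  · intro e he
    obtain ⟨hu, hue⟩ := (hexists e he).choose_spec
    exact Finset.mem_filter.mpr ⟨hu, e, he, hue⟩
  · intro e₁ h₁ e₂ h₂ heq'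
    obtain ⟨hu₁, hue₁⟩ := (hexists e₁ h₁).choose_spec
    obtain ⟨hu₂, hue₂⟩ := (hexists e₂ h₂).choose_spec
    have heq2 : (hexists e₁ h₁).choose = (hexists e₂ h₂).choose := heq'
    rw [← heq2] at hue₂
    exact matching_unique' hN h₁ h₂ hue₁ hue₂
  · intro u hu
    obtain ⟨hu', e, he, hue⟩ := Finset.mem_filter.mp hu
    refine ⟨e, he, ?_⟩
    obtain ⟨hc, hce⟩ := (hexists e he).choose_spec
    exact huniq e he _ hc _ hu' hce hue

lemma sides_right (hdisj : Disjoint U V)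
    (hbip : ∀ a b : W, G.Adj a b → (a ∈ U ∧ b ∈ V) ∨ (a ∈ V ∧ b ∈ U))
    {a b : W} (hadj : G.Adj a b) (ha : a ∈ U) : b ∈ V := by
  rcases hbip a b hadj with ⟨_, hb⟩ | ⟨ha', _⟩
  · exact hb
  · exact absurd ha' (fun h => Finset.disjoint_left.mp hdisj ha h)

lemma hbip_symm (hbip : ∀ a b : W, G.Adj a b → (a ∈ U ∧ b ∈ V) ∨ (a ∈ V ∧ b ∈ U)) :
    ∀ a b : W, G.Adj a b → (a ∈ V ∧ b ∈ U) ∨ (a ∈ U ∧ b ∈ V) := by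
  intro a b hadj
  exact (hbip a b hadj).symm

end Bipartite

section Swap
variable {W : Type*} [Fintype W] [DecidableEq W] {G : SimpleGraph W}
variable {N : Finset (Sym2 W)} {z w z₂ : W}

lemma swap_matching (hN : IsMatchingSet G N) (hadj : G.Adj z w)
    (hz : ¬ sat N z) (hmem : s(w,z₂) ∈ N) :
    IsMatchingSet G ((N.erase s(w,z₂)) ∪ {s(z,w)}) := by
  constructor
  · intro e he
    rcases Finset.mem_union.mp he with he | he
    · exact hN.1 (Finset.mem_of_mem_erase he)
    · rw [Finset.mem_singleton] at he
      subst he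
      exact G.mem_edgeSet.mpr hadj
  · intro e he f hf hef v hv
    have key : ∀ g, g ∈ N.erase s(w,z₂) → v ∈ g → v ∈ s(z,w) → False := by
      intro g hg hvg hvzw
      rcases Sym2.mem_iff.mp hvzw with h' | h'
      · exact hz ⟨g, Finset.mem_of_mem_erase hg, h' ▸ hvg⟩
      · have : g = s(w,z₂) := matching_unique' hN (Finset.mem_of_mem_erase hg) hmem
          (h' ▸ hvg) (Sym2.mem_mk_left w z₂)
        exact (Finset.mem_erase.mp hg).1 this
    rcases Finset.mem_union.mp he with he' | he'
    · rcases Finset.mem_union.mp hf with hf' | hf'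
      · exact hN.2 e (Finset.mem_of_mem_erase he') f (Finset.mem_of_mem_erase hf') hef v hv
      · exact key e he' hv.1 ((Finset.mem_singleton.mp hf') ▸ hv.2)
    · rcases Finset.mem_union.mp hf with hf' | hf'
      · exact key f hf' hv.2 ((Finset.mem_singleton.mp he') ▸ hv.1)
      · exact hef ((Finset.mem_singleton.mp he').trans (Finset.mem_singleton.mp hf').symm)

lemma sat_swap_z : sat ((N.erase s(w,z₂)) ∪ {s(z,w)}) z :=
  ⟨s(z,w), Finset.mem_union_right _ (Finset.mem_singleton_self _), Sym2.mem_mk_left z w⟩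

lemma sat_swap_w : sat ((N.erase s(w,z₂)) ∪ {s(z,w)}) w :=
  ⟨s(z,w), Finset.mem_union_right _ (Finset.mem_singleton_self _), Sym2.mem_mk_right z w⟩

lemma not_sat_swap_z₂ (hN : IsMatchingSet G N) (hz : ¬ sat N z) (hmem : s(w,z₂) ∈ N)
    (hwz₂ : w ≠ z₂) : ¬ sat ((N.erase s(w,z₂)) ∪ {s(z,w)}) z₂ := by
  rintro ⟨e, he, hze⟩
  rcases Finset.mem_union.mp he with he | he
  · have : e = s(w,z₂) := matching_unique' hN (Finset.mem_of_mem_erase he) hmem hze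
      (Sym2.mem_mk_right w z₂)
    exact (Finset.mem_erase.mp he).1 this
  · rw [Finset.mem_singleton] at he
    subst he
    rcases Sym2.mem_iff.mp hze with rfl | rfl
    · exact hz ⟨s(w,z₂), hmem, Sym2.mem_mk_right w z₂⟩
    · exact hwz₂ rfl

lemma sat_swap_iff (hN : IsMatchingSet G N) (hmem : s(w,z₂) ∈ N) {v : W}
    (hvz : v ≠ z) (hvz₂ : v ≠ z₂) :
    (sat ((N.erase s(w,z₂)) ∪ {s(z,w)}) v ↔ sat N v) := by
  constructor
  · rintro ⟨e, he, hve⟩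
    rcases Finset.mem_union.mp he with he | he
    · exact ⟨e, Finset.mem_of_mem_erase he, hve⟩
    · rw [Finset.mem_singleton] at he
      subst he
      rcases Sym2.mem_iff.mp hve with rfl | rfl
      · exact absurd rfl hvz
      · exact ⟨s(v,z₂), hmem, Sym2.mem_mk_left v z₂⟩
  · rintro ⟨e, he, hve⟩
    by_cases hew : e = s(w,z₂)
    · subst hew
      rcases Sym2.mem_iff.mp hve with rfl | rfl
      · exact ⟨s(z,v), Finset.mem_union_right _ (Finset.mem_singleton_self _),
          Sym2.mem_mk_right z v⟩
      · exact absurd rfl hvz₂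
    · exact ⟨e, Finset.mem_union_left _ (Finset.mem_erase.mpr ⟨hew, he⟩), hve⟩

lemma swap_card (hN : IsMatchingSet G N) (hz : ¬ sat N z) (hmem : s(w,z₂) ∈ N) :
    ((N.erase s(w,z₂)) ∪ {s(z,w)}).card = N.card := by
  have h1 : s(z,w) ∉ N.erase s(w,z₂) := fun h =>
    hz ⟨s(z,w), Finset.mem_of_mem_erase h, Sym2.mem_mk_left z w⟩
  rw [Finset.union_comm, ← Finset.insert_eq, Finset.card_insert_of_notMem h1,
    Finset.card_erase_of_mem hmem]
  have := Finset.card_pos.mpr ⟨_, hmem⟩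
  omega

lemma card_le_of_matching {M K : Finset (Sym2 W)} (heq : Equimatchable G)
    (hM : IsMaximalMatching G M) (hK : IsMatchingSet G K) : K.card ≤ M.card := by
  obtain ⟨K', hsub, hK'⟩ := extend_to_maximal hK
  calc K.card ≤ K'.card := Finset.card_le_card hsub
    _ = M.card := heq K' M hK' hM

end Swap

section Part1
variable {W : Type*} [Fintype W] [DecidableEq W]

/-- Alternating-path reachability: `Reach G U M N z` means that starting from the
maximal matching `M` and repeatedly shifting exposure along alternating edges we can
obtain the matching `N` in which the `U`-vertex `z` is exposed. -/
inductive Reach (G : SimpleGraph W) (U : Finset W) (M : Finset (Sym2 W)) :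
    Finset (Sym2 W) → W → Prop
  | base {x : W} : x ∈ U → ¬ sat M x → Reach G U M M x
  | step {N : Finset (Sym2 W)} {z w z₂ : W} : Reach G U M N z → G.Adj z w →
      s(w, z₂) ∈ N → Reach G U M ((N.erase s(w, z₂)) ∪ {s(z, w)}) z₂

variable {G : SimpleGraph W} {U V : Finset W}

lemma reach_invariant (hdisj : Disjoint U V)
    (hbip : ∀ a b : W, G.Adj a b → (a ∈ U ∧ b ∈ V) ∨ (a ∈ V ∧ b ∈ U))
    (heq : Equimatchable G)
    {M : Finset (Sym2 W)} (hM : IsMaximalMatching G M)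
    {N : Finset (Sym2 W)} {z : W} (h : Reach G U M N z) :
    IsMaximalMatching G N ∧ z ∈ U ∧ ¬ sat N z ∧
      (∀ v ∈ V, (sat N v ↔ sat M v)) ∧
      (∀ u ∈ U, ¬ sat N u → ∃ N', Reach G U M N' u) ∧
      (∀ v z₁ z₃, v ∈ V → s(v,z₁) ∈ N → s(v,z₃) ∈ M → z₁ ≠ z₃ →
        (∃ N', Reach G U M N' z₁) ∧ (∃ N'', Reach G U M N'' z₃)) := by
  induction h with
  | @base x hxU hxs =>
    refine ⟨hM, hxU, hxs, fun v _ => Iff.rfl, fun u hu hus => ⟨M, Reach.base hu hus⟩,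
      ?_⟩
    intro v z₁ z₃ _ h1 h3 hne
    exact absurd (matching_unique hM.1 h1 h3) hne
  | @step N z w z₂ hreach hadj hmem ih =>
    obtain ⟨hNmax, hzU, hzexp, hVsat, hUexp, hpart⟩ := ih
    have hNm : IsMatchingSet G N := hNmax.1
    have hwV : w ∈ V := sides_right hdisj hbip hadj hzU
    have hadjwz₂ : G.Adj w z₂ := adj_of_mem_matching hNm hmem
    have hz₂U : z₂ ∈ U := sides_right hdisj.symm (hbip_symm hbip) hadjwz₂ hwV
    have hdl := Finset.disjoint_left.mp hdisj
    have hwz₂ : w ≠ z₂ := G.ne_of_adj hadjwz₂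
    have hzz₂ : z ≠ z₂ := fun h =>
      hzexp ⟨s(w,z₂), hmem, h ▸ Sym2.mem_mk_right w z₂⟩
    have hN'm : IsMatchingSet G ((N.erase s(w,z₂)) ∪ {s(z,w)}) :=
      swap_matching hNm hadj hzexp hmem
    have hz₂exp : ¬ sat ((N.erase s(w,z₂)) ∪ {s(z,w)}) z₂ :=
      not_sat_swap_z₂ hNm hzexp hmem hwz₂
    -- maximality of the swapped matching
    have hN'max : IsMaximalMatching G ((N.erase s(w,z₂)) ∪ {s(z,w)}) := by
      refine maximal_of_sat hN'm ?_
      intro a b hab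
      by_contra hcon
      push_neg at hcon
      obtain ⟨hna, hnb⟩ := hcon
      -- a key step: an undominated edge must be at z₂ with an exposed V-endpoint
      have hkey : ∀ c : W, G.Adj z₂ c → ¬ sat ((N.erase s(w,z₂)) ∪ {s(z,w)}) c → False := by
        intro c hadjc hnc
        have hcV : c ∈ V := sides_right hdisj hbip hadjc hz₂U
        have hcz : c ≠ z := fun h => hdl hzU (h ▸ hcV)
        have hcz₂ : c ≠ z₂ := fun h => hdl hz₂U (h ▸ hcV)
        have hncN : ¬ sat N c := fun hs =>
          hnc ((sat_swap_iff hNm hmem hcz hcz₂).mpr hs)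
        -- insert the edge z₂c to get a too-large matching
        have hK : IsMatchingSet G
            (insert s(z₂,c) ((N.erase s(w,z₂)) ∪ {s(z,w)})) :=
          matching_insert hN'm hadjc hz₂exp hnc
        have hcard := card_le_of_matching heq hM hK
        have hnmem : s(z₂,c) ∉ (N.erase s(w,z₂)) ∪ {s(z,w)} :=
          not_mem_of_not_sat hz₂exp (Sym2.mem_mk_left z₂ c)
        rw [Finset.card_insert_of_notMem hnmem, swap_card hNm hzexp hmem] at hcard
        have hNM : N.card = M.card := heq N M hNmax hM
        omega
      -- the edge ab is dominated by N via some f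
      obtain ⟨f, hf, v, hve, hvf⟩ := hNmax.2 s(a,b) (G.mem_edgeSet.mpr hab)
      by_cases hfw : f = s(w,z₂)
      · subst hfw
        rcases Sym2.mem_iff.mp hvf with rfl | rfl
        · -- v = w is saturated in the swap
          rcases Sym2.mem_iff.mp hve with rfl | rfl
          · exact hna sat_swap_w
          · exact hnb sat_swap_w
        · -- v = z₂ : the other endpoint of ab is exposed, contradiction via hkey
          rcases Sym2.mem_iff.mp hve with rfl | rfl
          · exact hkey b hab hnb
          · exact hkey a (G.adj_symm hab) hna
      · have hfN' : f ∈ (N.erase s(w,z₂)) ∪ {s(z,w)} :=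
          Finset.mem_union_left _ (Finset.mem_erase.mpr ⟨hfw, hf⟩)
        rcases Sym2.mem_iff.mp hve with rfl | rfl
        · exact hna ⟨f, hfN', hvf⟩
        · exact hnb ⟨f, hfN', hvf⟩
    refine ⟨hN'max, hz₂U, hz₂exp, ?_, ?_, ?_⟩
    · -- V-saturation is preserved
      intro v hv
      have hvz : v ≠ z := fun h => hdl hzU (h ▸ hv)
      have hvz₂ : v ≠ z₂ := fun h => hdl hz₂U (h ▸ hv)
      rw [sat_swap_iff hNm hmem hvz hvz₂]
      exact hVsat v hv
    · -- exposed U vertices are reachable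
      intro u hu hus
      by_cases huz₂ : u = z₂
      · exact ⟨_, huz₂ ▸ Reach.step hreach hadj hmem⟩
      · have huz : u ≠ z := fun h => hus (h ▸ sat_swap_z)
        exact hUexp u hu (fun hs => hus ((sat_swap_iff hNm hmem huz huz₂).mpr hs))
    · -- partner invariant
      intro v z₁ z₃ hv h1 h3 hne
      have hvz : v ≠ z := fun h => hdl hzU (h ▸ hv)
      rcases Finset.mem_union.mp h1 with h1' | h1'
      · -- the edge v z₁ survives from N
        have h1N : s(v,z₁) ∈ N := Finset.mem_of_mem_erase h1'
        have hvw : v ≠ w := by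
          intro h
          subst h
          have : z₁ = z₂ := matching_unique hNm h1N hmem
          exact (Finset.mem_erase.mp h1').1 (by rw [this])
        exact hpart v z₁ z₃ hv h1N h3 hne
      · -- the edge v z₁ is the new edge s(z,w)
        rw [Finset.mem_singleton] at h1'
        rw [Sym2.eq_iff] at h1'
        rcases h1' with ⟨h1a, h1b⟩ | ⟨h1a, h1b⟩
        · exact absurd h1a hvz
        · -- v = w, z₁ = z
          subst h1a; subst h1b
          refine ⟨⟨N, hreach⟩, ?_⟩
          by_cases h3z₂ : z₃ = z₂
          · exact ⟨_, h3z₂ ▸ Reach.step hreach hadj hmem⟩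
          · exact (hpart v z₂ z₃ hv hmem h3 (fun h => h3z₂ h.symm)).2

end Part1

section Cross
variable {W : Type*} {G : SimpleGraph W}

lemma walk_cross (S : Finset W) [DecidableEq W] :
    ∀ {a b : W}, G.Walk a b → a ∈ S → b ∉ S → ∃ p q, p ∈ S ∧ q ∉ S ∧ G.Adj p q := by
  intro a b p
  induction p with
  | nil => intro ha hb; exact absurd ha hb
  | @cons a c b h q ih =>
    intro ha hb
    by_cases hc : c ∈ S
    · exact ih hc hb
    · exact ⟨a, c, ha, hc, h⟩

end Cross

section Partner
variable {W : Type*} [Fintype W] [DecidableEq W] {G : SimpleGraph W}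

open Classical in
/-- The partner of a vertex in a matching (junk value if unsaturated). -/
noncomputable def partnerFn (K : Finset (Sym2 W)) (z : W) : W :=
  if h : ∃ u, s(z,u) ∈ K then h.choose else z

lemma partnerFn_spec {K : Finset (Sym2 W)} {z : W} (h : sat K z) :
    s(z, partnerFn K z) ∈ K := by
  obtain ⟨e, he, hze⟩ := h
  obtain ⟨u, rfl⟩ := Sym2.mem_iff_exists.mp hze
  have hex : ∃ u, s(z,u) ∈ K := ⟨u, he⟩
  rw [partnerFn, dif_pos hex]
  exact hex.choose_spec

lemma partnerFn_inj {K : Finset (Sym2 W)} (hK : IsMatchingSet G K) {z₁ z₂ : W}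
    (h1 : sat K z₁) (h2 : sat K z₂) (he : partnerFn K z₁ = partnerFn K z₂) : z₁ = z₂ := by
  have hs1 := partnerFn_spec h1
  have hs2 := partnerFn_spec h2
  rw [he] at hs1
  have := matching_unique' hK hs1 hs2 (Sym2.mem_mk_right _ _) (Sym2.mem_mk_right _ _)
  rw [Sym2.eq_iff] at this
  rcases this with ⟨h', -⟩ | ⟨h', h''⟩
  · exact h'
  · exact h'.trans h''

lemma partnerFn_sat {K : Finset (Sym2 W)} {z : W} (h : sat K z) :
    sat K (partnerFn K z) := ⟨_, partnerFn_spec h, Sym2.mem_mk_right _ _⟩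

end Partner

section Part1Main
variable {W : Type*} [Fintype W] [DecidableEq W] {G : SimpleGraph W} {U V : Finset W}

lemma part1 (hdisj : Disjoint U V) (hcover : U ∪ V = Finset.univ)
    (hbip : ∀ a b : W, G.Adj a b → (a ∈ U ∧ b ∈ V) ∨ (a ∈ V ∧ b ∈ U))
    (hconn : G.Connected) (heq : Equimatchable G) (hcard : U.card = V.card)
    {M : Finset (Sym2 W)} (hM : IsMaximalMatching G M) : M.card = U.card := by
  classical
  have hdl := Finset.disjoint_left.mp hdisj
  set n := U.card with hn
  have hsatU : (U.filter (sat M)).card = M.card := card_sat_side hdisj hbip hM.1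
  have hm_le : M.card ≤ n := by
    rw [← hsatU]
    exact Finset.card_le_card (Finset.filter_subset _ _)
  by_contra hne
  have hmn : M.card < n := lt_of_le_of_ne hm_le hne
  set X := U.filter (fun u => ¬ sat M u) with hX
  set Y := V.filter (fun v => ¬ sat M v) with hY
  have hfilt : ∀ (S : Finset W) (K : Finset (Sym2 W)),
      (S.filter (fun u => ¬ sat K u)).card = S.card - (S.filter (sat K)).card := by
    intro S K
    rw [Finset.filter_not, Finset.card_sdiff_of_subset (Finset.filter_subset _ _)]
  have hXcard : X.card = n - M.card := by rw [hX, hfilt, hsatU]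
  have hYcard : Y.card = n - M.card := by
    have h1 : (V.filter (sat M)).card = M.card :=
      card_sat_side hdisj.symm (hbip_symm hbip) hM.1
    rw [hY, hfilt, h1, ← hcard]
  set Z := Finset.univ.filter (fun u => ∃ N, Reach G U M N u) with hZ
  set W' := V.filter (fun w => ∃ z, (∃ N, Reach G U M N z) ∧ G.Adj z w) with hW'
  have hZU : Z ⊆ U := by
    intro z hz
    obtain ⟨N, hN⟩ := (Finset.mem_filter.mp hz).2
    exact (reach_invariant hdisj hbip heq hM hN).2.1
  have hXZ : X ⊆ Z := by
    intro x hx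
    obtain ⟨hxU, hxs⟩ := Finset.mem_filter.mp hx
    exact Finset.mem_filter.mpr ⟨Finset.mem_univ x, M, Reach.base hxU hxs⟩
  have hW'sat : ∀ w ∈ W', sat M w := by
    intro w hw
    obtain ⟨hwV, z, ⟨N, hN⟩, hadj⟩ := Finset.mem_filter.mp hw
    obtain ⟨hNmax, hzU, hzexp, hVsat, -, -⟩ := reach_invariant hdisj hbip heq hM hN
    by_contra hws
    have hwsN : ¬ sat N w := fun hs => hws ((hVsat w hwV).mp hs)
    obtain ⟨f, hf, v, hve, hvf⟩ := hNmax.2 s(z,w) (G.mem_edgeSet.mpr hadj)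
    rcases Sym2.mem_iff.mp hve with rfl | rfl
    · exact hzexp ⟨f, hf, hvf⟩
    · exact hwsN ⟨f, hf, hvf⟩
  have hpartner : ∀ w ∈ W', ∀ z₃, s(w,z₃) ∈ M → z₃ ∈ Z := by
    intro w hw z₃ h3
    obtain ⟨hwV, z, ⟨N, hN⟩, hadj⟩ := Finset.mem_filter.mp hw
    obtain ⟨hNmax, hzU, hzexp, hVsat, -, hpart⟩ := reach_invariant hdisj hbip heq hM hN
    have hwsN : sat N w := (hVsat w hwV).mpr (hW'sat w hw)
    obtain ⟨e, he, hwe⟩ := hwsN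
    obtain ⟨z₂', rfl⟩ := Sym2.mem_iff_exists.mp hwe
    by_cases hz23 : z₂' = z₃
    · subst hz23
      exact Finset.mem_filter.mpr ⟨Finset.mem_univ _, _, Reach.step hN hadj he⟩
    · obtain ⟨-, N'', hN''⟩ := hpart w z₂' z₃ hwV he h3 hz23
      exact Finset.mem_filter.mpr ⟨Finset.mem_univ _, N'', hN''⟩
  -- the M-partner map of W' lands in Z, injectively, missing X
  set P := W'.image (partnerFn M) with hP
  have hPcard : P.card = W'.card := by
    rw [hP, Finset.card_image_of_injOn]
    intro w₁ h₁ w₂ h₂ hw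
    exact partnerFn_inj hM.1 (hW'sat w₁ h₁) (hW'sat w₂ h₂) hw
  have hPZ : P ⊆ Z := by
    intro u hu
    obtain ⟨w, hwW, rfl⟩ := Finset.mem_image.mp hu
    exact hpartner w hwW _ (partnerFn_spec (hW'sat w hwW))
  have hPX : Disjoint X P := by
    rw [Finset.disjoint_left]
    intro x hx hxP
    obtain ⟨w, hwW, rfl⟩ := Finset.mem_image.mp hxP
    exact (Finset.mem_filter.mp hx).2 (partnerFn_sat (hW'sat w hwW))
  have hZbig : W'.card + (n - M.card) ≤ Z.card := by
    have hsub : X ∪ P ⊆ Z := Finset.union_subset hXZ hPZ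
    have := Finset.card_le_card hsub
    rw [Finset.card_union_of_disjoint hPX] at this
    omega
  -- a crossing edge out of Z ∪ W'
  have hXne : X.Nonempty := Finset.card_pos.mp (by omega)
  have hYne : Y.Nonempty := Finset.card_pos.mp (by omega)
  obtain ⟨x₀, hx₀⟩ := hXne
  obtain ⟨y₀, hy₀⟩ := hYne
  have hy₀n : y₀ ∉ Z ∪ W' := by
    intro hy
    rcases Finset.mem_union.mp hy with hy | hy
    · exact hdl (hZU hy) (Finset.mem_filter.mp hy₀).1
    · exact (Finset.mem_filter.mp hy₀).2 (hW'sat y₀ hy)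
  obtain ⟨p, q, hpS, hqS, hpq⟩ := walk_cross (Z ∪ W')
    ((hconn.preconnected x₀ y₀).some)
    (Finset.mem_union_left _ (hXZ hx₀)) hy₀n
  -- identify the crossing edge: p ∈ W', q ∈ U \ Z
  have hpW' : p ∈ W' := by
    rcases Finset.mem_union.mp hpS with hp | hp
    · exfalso
      have hqV : q ∈ V := sides_right hdisj hbip hpq (hZU hp)
      have hqW' : q ∈ W' := Finset.mem_filter.mpr
        ⟨hqV, p, (Finset.mem_filter.mp hp).2, hpq⟩
      exact hqS (Finset.mem_union_right _ hqW')
    · exact hp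
  have hpV : p ∈ V := (Finset.mem_filter.mp hpW').1
  have hqU : q ∈ U := sides_right hdisj.symm (hbip_symm hbip) hpq hpV
  have hqZ : q ∉ Z := fun h => hqS (Finset.mem_union_left _ h)
  -- a maximal matching through the crossing edge
  obtain ⟨K, hKsub, hKmax⟩ := extend_to_maximal (G := G) (N := {s(q,p)})
    (by
      constructor
      · intro e he
        rw [Finset.coe_singleton, Set.mem_singleton_iff] at he
        subst he
        exact G.mem_edgeSet.mpr (G.adj_symm hpq)
      · intro e he f hf hef v hv
        rw [Finset.mem_singleton] at he hf
        exact hef (he.trans hf.symm))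
  have hKM : K.card = M.card := heq K M hKmax hM
  have hqpK : s(q,p) ∈ K := hKsub (Finset.mem_singleton_self _)
  -- count: Z-vertices saturated by K inject into W' minus p
  have hZsat : (Z.filter (sat K)).card ≤ W'.card - 1 := by
    have hmap : ∀ z ∈ Z.filter (sat K), partnerFn K z ∈ W'.erase p := by
      intro z hz
      obtain ⟨hzZ, hzs⟩ := Finset.mem_filter.mp hz
      have hsp := partnerFn_spec hzs
      have hadj : G.Adj z (partnerFn K z) := adj_of_mem_matching hKmax.1 hsp
      have hzU : z ∈ U := hZU hzZ
      have hwv : partnerFn K z ∈ V := sides_right hdisj hbip hadj hzU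
      refine Finset.mem_erase.mpr ⟨?_, Finset.mem_filter.mpr
        ⟨hwv, z, (Finset.mem_filter.mp hzZ).2, hadj⟩⟩
      intro hcn
      rw [hcn] at hsp
      have := matching_unique' hKmax.1 hsp hqpK (Sym2.mem_mk_right z p)
        (Sym2.mem_mk_right q p)
      rw [Sym2.eq_iff] at this
      rcases this with ⟨h', -⟩ | ⟨h', h''⟩
      · exact hqZ (h' ▸ hzZ)
      · exact hdl hzU (h' ▸ hpV)
    have hle : (Z.filter (sat K)).card ≤ (W'.erase p).card := by
      refine Finset.card_le_card_of_injOn (partnerFn K) hmap ?_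
      intro z₁ h₁ z₂ h₂ hch
      simp only [Finset.mem_coe, Finset.mem_filter] at h₁ h₂
      exact partnerFn_inj hKmax.1 h₁.2 h₂.2 hch
    have : (W'.erase p).card = W'.card - 1 := Finset.card_erase_of_mem hpW'
    omega
  have hZexp : (Z.filter (fun z => ¬ sat K z)).card ≤ n - M.card := by
    have hsub : Z.filter (fun z => ¬ sat K z) ⊆ U.filter (fun u => ¬ sat K u) := by
      intro z hz
      obtain ⟨hz1, hz2⟩ := Finset.mem_filter.mp hz
      exact Finset.mem_filter.mpr ⟨hZU hz1, hz2⟩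
    have hKU : (U.filter (sat K)).card = K.card := card_sat_side hdisj hbip hKmax.1
    have h2 := hfilt U K
    have h3 := Finset.card_le_card hsub
    omega
  have hsplit := hfilt Z K
  have hsplit2 : (Z.filter (sat K)).card ≤ Z.card :=
    Finset.card_le_card (Finset.filter_subset _ _)
  have hZcard : Z.card ≤ (Z.filter (sat K)).card + (n - M.card) := by omega
  have hW'pos : 0 < W'.card := Finset.card_pos.mpr ⟨p, hpW'⟩
  omega

end Part1Main

section Part2
variable {W : Type*} [Fintype W] [DecidableEq W] {G : SimpleGraph W} {U V : Finset W}

lemma singleton_matching {a b : W} (hab : G.Adj a b) : IsMatchingSet G {s(a,b)} := by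
  constructor
  · intro e he
    rw [Finset.coe_singleton, Set.mem_singleton_iff] at he
    subst he
    exact G.mem_edgeSet.mpr hab
  · intro e he f hf hef v hv
    rw [Finset.mem_singleton] at he hf
    exact hef (he.trans hf.symm)

lemma not_sat_sdiff {K R : Finset (Sym2 W)} (hK : IsMatchingSet G K) {x y : W}
    (hx : s(x,y) ∈ K) (hR : s(x,y) ∈ R) : ¬ sat (K \ R) x := by
  rintro ⟨e, he, hxe⟩
  obtain ⟨he1, he2⟩ := Finset.mem_sdiff.mp he
  have : e = s(x,y) := matching_unique' hK he1 hx hxe (Sym2.mem_mk_left x y)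
  exact he2 (this ▸ hR)

lemma not_sat_insert {K : Finset (Sym2 W)} {e : Sym2 W} {x : W}
    (hxe : x ∉ e) (hs : ¬ sat K x) : ¬ sat (insert e K) x := by
  rintro ⟨f, hf, hxf⟩
  rcases Finset.mem_insert.mp hf with rfl | hf
  · exact hxe hxf
  · exact hs ⟨f, hf, hxf⟩

/-- In our context a matching with exactly two exposed, non-adjacent vertices is
impossible (it would be a maximal matching of the wrong size). -/
lemma two_exposed (hdisj : Disjoint U V) (hcover : U ∪ V = Finset.univ)
    (hbip : ∀ a b : W, G.Adj a b → (a ∈ U ∧ b ∈ V) ∨ (a ∈ V ∧ b ∈ U))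
    (hconn : G.Connected) (heq : Equimatchable G) (hcard : U.card = V.card)
    {K : Finset (Sym2 W)} (hK : IsMatchingSet G K) (hKc : K.card + 1 = U.card)
    {p q : W} (hsat : ∀ x, x ≠ p → x ≠ q → sat K x) (hnadj : ¬ G.Adj p q) : False := by
  have hKmax : IsMaximalMatching G K := by
    refine maximal_of_sat hK ?_
    intro a b hab
    by_contra hcon
    push_neg at hcon
    obtain ⟨hna, hnb⟩ := hcon
    have ha : a = p ∨ a = q := by
      by_contra h
      push_neg at h
      exact hna (hsat a h.1 h.2)
    have hb : b = p ∨ b = q := by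
      by_contra h
      push_neg at h
      exact hnb (hsat b h.1 h.2)
    have hne := G.ne_of_adj hab
    rcases ha with rfl | rfl <;> rcases hb with rfl | rfl
    · exact hne rfl
    · exact hnadj hab
    · exact hnadj (G.adj_symm hab)
    · exact hne rfl
  have := part1 hdisj hcover hbip hconn heq hcard hKmax
  omega

/-- Every maximal matching is perfect. -/
lemma all_sat (hdisj : Disjoint U V) (hcover : U ∪ V = Finset.univ)
    (hbip : ∀ a b : W, G.Adj a b → (a ∈ U ∧ b ∈ V) ∨ (a ∈ V ∧ b ∈ U))
    (hconn : G.Connected) (heq : Equimatchable G) (hcard : U.card = V.card)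
    {N : Finset (Sym2 W)} (hN : IsMaximalMatching G N) : ∀ v : W, sat N v := by
  classical
  have hNc : N.card = U.card := part1 hdisj hcover hbip hconn heq hcard hN
  have hU : ∀ u ∈ U, sat N u := by
    have h1 : (U.filter (sat N)).card = U.card := by
      rw [card_sat_side hdisj hbip hN.1, hNc]
    have h2 : U.filter (sat N) = U :=
      Finset.eq_of_subset_of_card_le (Finset.filter_subset _ _) (le_of_eq h1.symm)
    intro u hu
    have : u ∈ U.filter (sat N) := by rw [h2]; exact hu
    exact (Finset.mem_filter.mp this).2
  have hV : ∀ v ∈ V, sat N v := by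
    have h1 : (V.filter (sat N)).card = V.card := by
      rw [card_sat_side hdisj.symm (hbip_symm hbip) hN.1, hNc, hcard]
    have h2 : V.filter (sat N) = V :=
      Finset.eq_of_subset_of_card_le (Finset.filter_subset _ _) (le_of_eq h1.symm)
    intro v hv
    have : v ∈ V.filter (sat N) := by rw [h2]; exact hv
    exact (Finset.mem_filter.mp this).2
  intro v
  have : v ∈ U ∪ V := hcover ▸ Finset.mem_univ v
  rcases Finset.mem_union.mp this with h | h
  · exact hU v h
  · exact hV v h

end Part2

section Part3
variable {W : Type*} [Fintype W] [DecidableEq W] {G : SimpleGraph W} {U V : Finset W}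

lemma adj_step3 (hdisj : Disjoint U V) (hcover : U ∪ V = Finset.univ)
    (hbip : ∀ a b : W, G.Adj a b → (a ∈ U ∧ b ∈ V) ∨ (a ∈ V ∧ b ∈ U))
    (hconn : G.Connected) (heq : Equimatchable G) (hcard : U.card = V.card)
    {u a b v : W} (hu : u ∈ U) (hv : v ∈ V)
    (h1 : G.Adj u a) (h2 : G.Adj a b) (h3 : G.Adj b v) : G.Adj u v := by
  classical
  by_cases hub : u = b
  · exact hub ▸ h3
  by_cases hav : a = v
  · exact hav ▸ h1
  have hdl := Finset.disjoint_left.mp hdisj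
  have haV : a ∈ V := sides_right hdisj hbip h1 hu
  have hbU : b ∈ U := sides_right hdisj.symm (hbip_symm hbip) h2 haV
  have hua : u ≠ a := fun h => hdl hu (h ▸ haV)
  have huv : u ≠ v := fun h => hdl hu (h ▸ hv)
  have hvb : v ≠ b := fun h => hdl hbU (h ▸ hv)
  have hab : a ≠ b := G.ne_of_adj h2
  -- a maximal (hence perfect) matching through ab
  obtain ⟨M, hMsub, hM⟩ := extend_to_maximal (singleton_matching h2)
  have habM : s(a,b) ∈ M := hMsub (Finset.mem_singleton_self _)
  have hall : ∀ x : W, sat M x := all_sat hdisj hcover hbip hconn heq hcard hM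
  have hMc : M.card = U.card := part1 hdisj hcover hbip hconn heq hcard hM
  set a' := partnerFn M u with ha'def
  have hua' : s(u, a') ∈ M := partnerFn_spec (hall u)
  set b' := partnerFn M v with hb'def
  have hvb' : s(v, b') ∈ M := partnerFn_spec (hall v)
  have ha'V : a' ∈ V := sides_right hdisj hbip (adj_of_mem_matching hM.1 hua') hu
  have hb'U : b' ∈ U := sides_right hdisj.symm (hbip_symm hbip)
    (adj_of_mem_matching hM.1 hvb') hv
  have ha'a : a' ≠ a := by
    intro h
    have heq' : s(u,a') = s(a,b) := matching_unique' hM.1 hua' habM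
      (h ▸ Sym2.mem_mk_right u a') (Sym2.mem_mk_left a b)
    rw [Sym2.eq_iff] at heq'
    rcases heq' with ⟨h', -⟩ | ⟨h', -⟩
    · exact hua h'
    · exact hub h'
  have hb'b : b' ≠ b := by
    intro h
    have heq' : s(v,b') = s(a,b) := matching_unique' hM.1 hvb' habM
      (h ▸ Sym2.mem_mk_right v b') (Sym2.mem_mk_right a b)
    rw [Sym2.eq_iff] at heq'
    rcases heq' with ⟨h', -⟩ | ⟨h', -⟩
    · exact hav h'.symm
    · exact hvb h'
  by_cases ha'v : a' = v
  · exact adj_of_mem_matching hM.1 (ha'v ▸ hua')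
  by_cases hb'u : b' = u
  · exact G.adj_symm (adj_of_mem_matching hM.1 (hb'u ▸ hvb'))
  have hua'_ne_ab : s(u,a') ≠ s(a,b) := by
    intro h
    rw [Sym2.eq_iff] at h
    rcases h with ⟨h', -⟩ | ⟨h', -⟩
    · exact hua h'
    · exact hub h'
  have hua'_ne_vb' : s(u,a') ≠ s(v,b') := by
    intro h
    rw [Sym2.eq_iff] at h
    rcases h with ⟨h', -⟩ | ⟨h', -⟩
    · exact huv h'
    · exact hb'u h'.symm
  have hab_ne_vb' : s(a,b) ≠ s(v,b') := by
    intro h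
    rw [Sym2.eq_iff] at h
    rcases h with ⟨h', -⟩ | ⟨h', -⟩
    · exact hav h'
    · exact hdl hb'U (h' ▸ haV)
  have hMpos : 3 ≤ M.card := by
    have hsub : {s(u,a'), s(a,b), s(v,b')} ⊆ M := by
      intro e he
      simp only [Finset.mem_insert, Finset.mem_singleton] at he
      rcases he with rfl | rfl | rfl
      · exact hua'
      · exact habM
      · exact hvb'
    have hc3 : ({s(u,a'), s(a,b), s(v,b')} : Finset (Sym2 W)).card = 3 := by
      rw [Finset.card_insert_of_notMem, Finset.card_insert_of_notMem,
        Finset.card_singleton]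
      · simp only [Finset.mem_singleton]
        exact hab_ne_vb'
      · simp only [Finset.mem_insert, Finset.mem_singleton]
        push_neg
        exact ⟨hua'_ne_ab, hua'_ne_vb'⟩
    calc 3 = ({s(u,a'), s(a,b), s(v,b')} : Finset (Sym2 W)).card := hc3.symm
      _ ≤ M.card := Finset.card_le_card hsub
  -- Step A : a' and b' are adjacent
  have hADJ : G.Adj a' b' := by
    by_contra hnadj
    set R : Finset (Sym2 W) := {s(u,a'), s(a,b), s(v,b')} with hR
    have hRsub : R ⊆ M := by
      intro e he
      simp only [hR, Finset.mem_insert, Finset.mem_singleton] at he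
      rcases he with rfl | rfl | rfl
      · exact hua'
      · exact habM
      · exact hvb'
    have hRcard : R.card = 3 := by
      rw [hR, Finset.card_insert_of_notMem, Finset.card_insert_of_notMem,
        Finset.card_singleton]
      · simp only [Finset.mem_singleton]
        exact hab_ne_vb'
      · simp only [Finset.mem_insert, Finset.mem_singleton]
        push_neg
        exact ⟨hua'_ne_ab, hua'_ne_vb'⟩
    have hm0 : IsMatchingSet G (M \ R) := matching_sub hM.1 (Finset.sdiff_subset)
    have hbaM : s(b,a) ∈ M := by rw [Sym2.eq_swap]; exact habM
    have hbaR : s(b,a) ∈ R := by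
      rw [Sym2.eq_swap]
      simp [hR]
    have hnb : ¬ sat (M \ R) b := not_sat_sdiff hM.1 hbaM hbaR
    have hvb'R : s(v,b') ∈ R := by simp [hR]
    have hnv : ¬ sat (M \ R) v := not_sat_sdiff hM.1 hvb' hvb'R
    have hm1 : IsMatchingSet G (insert s(b,v) (M \ R)) := matching_insert hm0 h3 hnb hnv
    have hua'R : s(u,a') ∈ R := by simp [hR]
    have habR : s(a,b) ∈ R := by simp [hR]
    have hnu : ¬ sat (insert s(b,v) (M \ R)) u :=
      not_sat_insert (by rw [Sym2.mem_iff]; push_neg; exact ⟨hub, huv⟩)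
        (not_sat_sdiff hM.1 hua' hua'R)
    have hna : ¬ sat (insert s(b,v) (M \ R)) a :=
      not_sat_insert (by rw [Sym2.mem_iff]; push_neg; exact ⟨hab, hav⟩)
        (not_sat_sdiff hM.1 habM habR)
    have hm2 : IsMatchingSet G (insert s(u,a) (insert s(b,v) (M \ R))) :=
      matching_insert hm1 h1 hnu hna
    have hc0 : (M \ R).card = M.card - 3 := by rw [Finset.card_sdiff_of_subset hRsub, hRcard]
    have hc1 : (insert s(b,v) (M \ R)).card = M.card - 3 + 1 := by
      rw [Finset.card_insert_of_notMem
        (not_mem_of_not_sat hnb (Sym2.mem_mk_left b v)), hc0]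
    have hc2 : (insert s(u,a) (insert s(b,v) (M \ R))).card = M.card - 3 + 2 := by
      rw [Finset.card_insert_of_notMem
        (not_mem_of_not_sat hnu (Sym2.mem_mk_left u a)), hc1]
    have hKc : (insert s(u,a) (insert s(b,v) (M \ R))).card + 1 = U.card := by omega
    have hsat : ∀ x, x ≠ a' → x ≠ b' →
        sat (insert s(u,a) (insert s(b,v) (M \ R))) x := by
      intro x hxa' hxb'
      obtain ⟨e, he, hxe⟩ := hall x
      by_cases heR : e ∈ R
      · simp only [hR, Finset.mem_insert, Finset.mem_singleton] at heR
        rcases heR with rfl | rfl | rfl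
        · rcases Sym2.mem_iff.mp hxe with h' | h'
          · rw [h']
            exact ⟨s(u,a), Finset.mem_insert_self _ _, Sym2.mem_mk_left _ _⟩
          · exact absurd h' hxa'
        · rcases Sym2.mem_iff.mp hxe with h' | h'
          · rw [h']
            exact ⟨s(u,a), Finset.mem_insert_self _ _, Sym2.mem_mk_right _ _⟩
          · rw [h']
            exact ⟨s(b,v), Finset.mem_insert_of_mem (Finset.mem_insert_self _ _),
              Sym2.mem_mk_left _ _⟩
        · rcases Sym2.mem_iff.mp hxe with h' | h'
          · rw [h']
            exact ⟨s(b,v), Finset.mem_insert_of_mem (Finset.mem_insert_self _ _),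
              Sym2.mem_mk_right _ _⟩
          · exact absurd h' hxb'
      · exact ⟨e, Finset.mem_insert_of_mem (Finset.mem_insert_of_mem
          (Finset.mem_sdiff.mpr ⟨he, heR⟩)), hxe⟩
    exact two_exposed hdisj hcover hbip hconn heq hcard hm2 hKc hsat hnadj
  -- Step B : u and v are adjacent
  by_contra hnuv
  set R2 : Finset (Sym2 W) := {s(u,a'), s(v,b')} with hR2
  have hR2sub : R2 ⊆ M := by
    intro e he
    simp only [hR2, Finset.mem_insert, Finset.mem_singleton] at he
    rcases he with rfl | rfl
    · exact hua'
    · exact hvb'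
  have hR2card : R2.card = 2 := by
    rw [hR2, Finset.card_insert_of_notMem, Finset.card_singleton]
    simp only [Finset.mem_singleton]
    exact hua'_ne_vb'
  have hm0 : IsMatchingSet G (M \ R2) := matching_sub hM.1 (Finset.sdiff_subset)
  have ha'uM : s(a',u) ∈ M := by rw [Sym2.eq_swap]; exact hua'
  have ha'uR : s(a',u) ∈ R2 := by
    rw [Sym2.eq_swap]
    simp [hR2]
  have hb'vM : s(b',v) ∈ M := by rw [Sym2.eq_swap]; exact hvb'
  have hb'vR : s(b',v) ∈ R2 := by
    rw [Sym2.eq_swap]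
    simp [hR2]
  have hna' : ¬ sat (M \ R2) a' := not_sat_sdiff hM.1 ha'uM ha'uR
  have hnb' : ¬ sat (M \ R2) b' := not_sat_sdiff hM.1 hb'vM hb'vR
  have hm3 : IsMatchingSet G (insert s(a',b') (M \ R2)) := matching_insert hm0 hADJ hna' hnb'
  have hc0 : (M \ R2).card = M.card - 2 := by rw [Finset.card_sdiff_of_subset hR2sub, hR2card]
  have hc1 : (insert s(a',b') (M \ R2)).card = M.card - 2 + 1 := by
    rw [Finset.card_insert_of_notMem
      (not_mem_of_not_sat hna' (Sym2.mem_mk_left a' b')), hc0]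
  have hKc : (insert s(a',b') (M \ R2)).card + 1 = U.card := by omega
  have hsat : ∀ x, x ≠ u → x ≠ v → sat (insert s(a',b') (M \ R2)) x := by
    intro x hxu hxv
    obtain ⟨e, he, hxe⟩ := hall x
    by_cases heR : e ∈ R2
    · simp only [hR2, Finset.mem_insert, Finset.mem_singleton] at heR
      rcases heR with rfl | rfl
      · rcases Sym2.mem_iff.mp hxe with h' | h'
        · exact absurd h' hxu
        · rw [h']
          exact ⟨s(a',b'), Finset.mem_insert_self _ _, Sym2.mem_mk_left _ _⟩
      · rcases Sym2.mem_iff.mp hxe with h' | h'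
        · exact absurd h' hxv
        · rw [h']
          exact ⟨s(a',b'), Finset.mem_insert_self _ _, Sym2.mem_mk_right _ _⟩
    · exact ⟨e, Finset.mem_insert_of_mem (Finset.mem_sdiff.mpr ⟨he, heR⟩), hxe⟩
  exact two_exposed hdisj hcover hbip hconn heq hcard hm3 hKc hsat hnuv

end Part3

section Part4
variable {W : Type*} [Fintype W] [DecidableEq W] {G : SimpleGraph W} {U V : Finset W}

lemma complete_adj (hdisj : Disjoint U V) (hcover : U ∪ V = Finset.univ)
    (hbip : ∀ a b : W, G.Adj a b → (a ∈ U ∧ b ∈ V) ∨ (a ∈ V ∧ b ∈ U))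
    (hconn : G.Connected) (heq : Equimatchable G) (hcard : U.card = V.card)
    {x y : W} (hx : x ∈ U) (hy : y ∈ V) : G.Adj x y := by
  classical
  have hdl := Finset.disjoint_left.mp hdisj
  have key : ∀ k : ℕ, ∀ x y : W, ∀ p : G.Walk x y, p.length ≤ k → x ∈ U → y ∈ V →
      G.Adj x y := by
    intro k
    induction k using Nat.strong_induction_on with
    | _ k ih =>
      intro x y p hp hx hy
      cases p with
      | nil => exact absurd hy (hdl hx)
      | @cons _ c _ h q =>
        cases q with
        | nil => exact h
        | @cons _ d _ h₂ r =>
          have hcV : c ∈ V := sides_right hdisj hbip h hx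
          have hdU : d ∈ U := sides_right hdisj.symm (hbip_symm hbip) h₂ hcV
          have hlen : r.length + 2 ≤ k := by
            simp only [SimpleGraph.Walk.length_cons] at hp
            omega
          have hdy : G.Adj d y :=
            ih (k - 1) (by omega) d y r (by omega) hdU hy
          exact adj_step3 hdisj hcover hbip hconn heq hcard hx hy h h₂ hdy
  exact key _ x y ((hconn.preconnected x y).some) le_rfl hx hy

end Part4

/-- A connected bipartite equimatchable graph with balanced bipartition `U ∪ V`,
`|U| = |V| = n`, is isomorphic to `K_{n,n}`. -/
theorem equimatchable_balanced_bipartite_iso {W : Type*} [Fintype W] [DecidableEq W]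
    (G : SimpleGraph W) (U V : Finset W)
    (hdisj : Disjoint U V) (hcover : U ∪ V = Finset.univ)
    (hbip : ∀ a b : W, G.Adj a b → (a ∈ U ∧ b ∈ V) ∨ (a ∈ V ∧ b ∈ U))
    (hconn : G.Connected) (heq : Equimatchable G) (hcard : U.card = V.card) :
    Nonempty (G ≃g completeBipartiteGraph (Fin U.card) (Fin U.card)) := by
  classical
  have hdl := Finset.disjoint_left.mp hdisj
  have hUV : ∀ w : W, w ∉ U → w ∈ V := by
    intro w hw
    have hmem : w ∈ U ∪ V := by rw [hcover]; exact Finset.mem_univ w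
    rcases Finset.mem_union.mp hmem with h | h
    · exact absurd h hw
    · exact h
  let eU : {x // x ∈ U} ≃ Fin U.card := U.equivFin
  let eV2 : {x : W // ¬ x ∈ U} ≃ Fin U.card :=
    ((Equiv.subtypeEquivRight (fun w => ⟨fun h => hUV w h, fun h hU => hdl hU h⟩)).trans
      V.equivFin).trans (finCongr hcard.symm)
  let e : W ≃ (Fin U.card ⊕ Fin U.card) :=
    (Equiv.sumCompl (fun w => w ∈ U)).symm.trans (Equiv.sumCongr eU eV2)
  have hel : ∀ w (h : w ∈ U), e w = Sum.inl (eU ⟨w, h⟩) := by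
    intro w h
    show ((Equiv.sumCompl (fun w => w ∈ U)).symm.trans (Equiv.sumCongr eU eV2)) w = _
    rw [Equiv.trans_apply, Equiv.sumCompl_symm_apply_of_pos h]
    rfl
  have her : ∀ w (h : w ∉ U), e w = Sum.inr (eV2 ⟨w, h⟩) := by
    intro w h
    show ((Equiv.sumCompl (fun w => w ∈ U)).symm.trans (Equiv.sumCongr eU eV2)) w = _
    rw [Equiv.trans_apply, Equiv.sumCompl_symm_apply_of_neg h]
    rfl
  refine ⟨⟨e, ?_⟩⟩
  intro x y
  show (completeBipartiteGraph _ _).Adj (e x) (e y) ↔ G.Adj x y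
  by_cases hx : x ∈ U <;> by_cases hy : y ∈ U
  · apply iff_of_false
    · rw [hel x hx, hel y hy, completeBipartiteGraph_adj]
      simp
    · intro hadj
      rcases hbip x y hadj with ⟨-, h'⟩ | ⟨h', -⟩
      · exact hdl hy h'
      · exact hdl hx h'
  · apply iff_of_true
    · rw [hel x hx, her y hy, completeBipartiteGraph_adj]
      simp
    · exact complete_adj hdisj hcover hbip hconn heq hcard hx (hUV y hy)
  · apply iff_of_true
    · rw [her x hx, hel y hy, completeBipartiteGraph_adj]
      simp
    · exact G.adj_symm (complete_adj hdisj hcover hbip hconn heq hcard hy (hUV x hx))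
  · apply iff_of_false
    · rw [her x hx, her y hy, completeBipartiteGraph_adj]
      simp
    · intro hadj
      rcases hbip x y hadj with ⟨h', -⟩ | ⟨-, h'⟩
      · exact hx h'
      · exact hy h'
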